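/- Let X be a separable real Banach space and Y a real Banach space. Let U : X → Y be a bijection with the property that for every x₀ ∈ X there exists ε > 0 such that the restriction of U to the closed ball B(x₀, ε) is an isometry. Then U is a surjective isometry from X onto Y (this answers Scottish Book Problem 155 affirmatively in the separable case). -/

import Mathlib

open Filter Topology Metric Set

set_option maxHeartbeats 1600000

/-- If `g` satisfies a pointwise local Lipschitz-type bound at every point of `[a,b]`,
then it satisfies the global Lipschitz bound from the left endpoint. -/
private lemma lip_of_loc {E : Type*} [NormedAddCommGroup E] (g : ℝ → E) (L a b : ℝ)
    (hab : a ≤ b)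
    (h : ∀ t ∈ Set.Icc a b, ∃ ε > 0, ∀ s : ℝ, |s - t| ≤ ε → ‖g s - g t‖ ≤ L * |s - t|) :
    ∀ t ∈ Set.Icc a b, ‖g t - g a‖ ≤ L * (t - a) := by
  set T := {t : ℝ | t ∈ Set.Icc a b ∧ ∀ v ∈ Set.Icc a t, ‖g v - g a‖ ≤ L * (v - a)} with hTdef
  have haT : a ∈ T := by
    refine ⟨⟨le_refl a, hab⟩, fun v hv => ?_⟩
    have hva : v = a := le_antisymm hv.2 hv.1
    simp [hva]
  have hTne : T.Nonempty := ⟨a, haT⟩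
  have hbdd : BddAbove T := ⟨b, fun t ht => ht.1.2⟩
  have hac : a ≤ sSup T := le_csSup hbdd haT
  have hcb : sSup T ≤ b := csSup_le hTne (fun t ht => ht.1.2)
  obtain ⟨ε, hε, hl⟩ := h (sSup T) ⟨hac, hcb⟩
  have hcT : sSup T ∈ T := by
    refine ⟨⟨hac, hcb⟩, fun v hv => ?_⟩
    rcases lt_or_eq_of_le hv.2 with hvc | hvc
    · obtain ⟨t, htT, hvt⟩ := exists_lt_of_lt_csSup hTne hvc
      exact htT.2 v ⟨hv.1, hvt.le⟩
    · rw [hvc]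
      obtain ⟨t, htT, hlt⟩ := exists_lt_of_lt_csSup hTne
        (show sSup T - ε < sSup T by linarith)
      have htc : t ≤ sSup T := le_csSup hbdd htT
      have habs : |t - sSup T| ≤ ε := abs_le.2 ⟨by linarith, by linarith⟩
      have h2 : ‖g t - g (sSup T)‖ ≤ L * |t - sSup T| := hl t habs
      have h3 : ‖g t - g a‖ ≤ L * (t - a) := htT.2 t ⟨htT.1.1, le_refl t⟩
      have htri : ‖g (sSup T) - g a‖ ≤ ‖g (sSup T) - g t‖ + ‖g t - g a‖ := by
        have := dist_triangle (g (sSup T)) (g t) (g a)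
        simpa [dist_eq_norm] using this
      have hrev : ‖g (sSup T) - g t‖ = ‖g t - g (sSup T)‖ := norm_sub_rev _ _
      have habs2 : |t - sSup T| = sSup T - t := by
        rw [abs_sub_comm]; exact abs_of_nonneg (by linarith)
      rw [habs2] at h2
      have hring : L * (sSup T - t) + L * (t - a) = L * (sSup T - a) := by ring
      linarith [htri, hrev ▸ h2]
  have hcb' : sSup T = b := by
    by_contra hne
    have hcblt : sSup T < b := lt_of_le_of_ne hcb hne
    have hcw : sSup T < min b (sSup T + ε) := lt_min hcblt (by linarith)
    have hwT : min b (sSup T + ε) ∈ T := by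
      refine ⟨⟨le_trans hac hcw.le, min_le_left _ _⟩, fun v hv => ?_⟩
      rcases le_or_gt v (sSup T) with hvc | hvc
      · exact hcT.2 v ⟨hv.1, hvc⟩
      · have hvw : v ≤ sSup T + ε := le_trans hv.2 (min_le_right _ _)
        have habs : |v - sSup T| ≤ ε := abs_le.2 ⟨by linarith, by linarith⟩
        have h2 : ‖g v - g (sSup T)‖ ≤ L * |v - sSup T| := hl v habs
        have habs2 : |v - sSup T| = v - sSup T := abs_of_nonneg (by linarith)
        rw [habs2] at h2
        have h3 : ‖g (sSup T) - g a‖ ≤ L * (sSup T - a) := hcT.2 (sSup T) ⟨hac, le_refl _⟩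
        have htri : ‖g v - g a‖ ≤ ‖g v - g (sSup T)‖ + ‖g (sSup T) - g a‖ := by
          have := dist_triangle (g v) (g (sSup T)) (g a)
          simpa [dist_eq_norm] using this
        have hring : L * (v - sSup T) + L * (sSup T - a) = L * (v - a) := by ring
        linarith
    have := le_csSup hbdd hwT
    exact absurd this (not_le.2 hcw)
  intro t ht
  have hbT : b ∈ T := hcb' ▸ hcT
  exact hbT.2 t ht

/-- Scottish Book Problem 155, separable case: a locally isometric bijection
between real Banach spaces, with `X` separable, is a surjective isometry. -/
theorem scottish_book_155
    {X Y : Type*} [NormedAddCommGroup X] [NormedSpace ℝ X] [CompleteSpace X]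
    [TopologicalSpace.SeparableSpace X]
    [NormedAddCommGroup Y] [NormedSpace ℝ Y] [CompleteSpace Y]
    (U : X → Y) (hU : Function.Bijective U)
    (hloc : ∀ x₀ : X, ∃ ε > 0, ∀ x₁ ∈ Metric.closedBall x₀ ε, ∀ x₂ ∈ Metric.closedBall x₀ ε,
      ‖U x₁ - U x₂‖ = ‖x₁ - x₂‖) :
    Function.Surjective U ∧ ∀ x₁ x₂ : X, ‖U x₁ - U x₂‖ = ‖x₁ - x₂‖ := by
  classical
  haveI : Nonempty X := ⟨0⟩
  set V : Y → X := Function.invFun U with hVdef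
  have hVU : ∀ x : X, V (U x) = x := fun x => Function.leftInverse_invFun hU.1 x
  have hUV : ∀ y : Y, U (V y) = y := fun y => Function.rightInverse_invFun hU.2 y
  choose r hr hiso using hloc
  -- U is 1-Lipschitz
  have hUlip : ∀ x₁ x₂ : X, ‖U x₁ - U x₂‖ ≤ ‖x₁ - x₂‖ := by
    intro x₁ x₂
    set M := ‖x₂ - x₁‖ with hM
    have hM0 : 0 ≤ M := norm_nonneg _
    set γ : ℝ → X := fun t => x₁ + t • (x₂ - x₁) with hγdef
    have hγn : ∀ s t : ℝ, ‖γ s - γ t‖ = |s - t| * M := by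
      intro s t
      have h1 : γ s - γ t = (s - t) • (x₂ - x₁) := by
        simp only [hγdef]
        rw [add_sub_add_left_eq_sub, ← sub_smul]
      rw [h1, norm_smul, Real.norm_eq_abs]
    have hloc' : ∀ t ∈ Set.Icc (0:ℝ) 1, ∃ ε > 0, ∀ s : ℝ, |s - t| ≤ ε →
        ‖U (γ s) - U (γ t)‖ ≤ M * |s - t| := by
      intro t _
      refine ⟨r (γ t) / (M + 1), div_pos (hr _) (by linarith), fun s hs => ?_⟩
      have hball : γ s ∈ closedBall (γ t) (r (γ t)) := by
        rw [mem_closedBall, dist_eq_norm, hγn]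
        calc |s - t| * M ≤ (r (γ t)/(M+1)) * M :=
              mul_le_mul_of_nonneg_right hs hM0
        _ ≤ r (γ t) := by
              rw [div_mul_eq_mul_div, div_le_iff₀ (by linarith : (0:ℝ) < M+1)]
              nlinarith [(hr (γ t)).le]
      have h2 := hiso (γ t) (γ s) hball (γ t) (mem_closedBall_self (hr _).le)
      exact le_of_eq (by rw [h2, hγn, mul_comm])
    have key' := lip_of_loc (fun t => U (γ t)) M 0 1 zero_le_one hloc' 1
      ⟨zero_le_one, le_refl 1⟩
    have key : ‖U (γ 1) - U (γ 0)‖ ≤ M * (1 - 0) := key'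
    have hγ1 : γ 1 = x₂ := by simp [hγdef]
    have hγ0 : γ 0 = x₁ := by simp [hγdef]
    rw [hγ1, hγ0] at key
    calc ‖U x₁ - U x₂‖ = ‖U x₂ - U x₁‖ := norm_sub_rev _ _
    _ ≤ M * (1 - 0) := key
    _ = ‖x₁ - x₂‖ := by rw [hM, norm_sub_rev]; ring
  -- U is continuous
  have hUcont : Continuous U := by
    rw [Metric.continuous_iff]
    intro x ε hε
    refine ⟨ε, hε, fun a hab => ?_⟩
    rw [dist_eq_norm] at hab ⊢
    exact lt_of_le_of_lt (hUlip a x) hab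
  -- the inverse is 1-Lipschitz
  have hVlip : ∀ y₁ y₂ : Y, ‖V y₁ - V y₂‖ ≤ ‖y₁ - y₂‖ := by
    intro y₁ y₂
    set L := ‖y₂ - y₁‖ with hLdef
    have hL0 : 0 ≤ L := norm_nonneg _
    set σ : ℝ → Y := fun t => y₁ + t • (y₂ - y₁) with hσdef
    set f : ℝ → X := fun t => V (σ t) with hfdef
    have hfσ : ∀ t : ℝ, U (f t) = σ t := fun t => hUV (σ t)
    have hσn : ∀ s t : ℝ, ‖σ s - σ t‖ = |s - t| * L := by
      intro s t
      have h1 : σ s - σ t = (s - t) • (y₂ - y₁) := by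
        simp only [hσdef]
        rw [add_sub_add_left_eq_sub, ← sub_smul]
      rw [h1, norm_smul, Real.norm_eq_abs]
    have hσcont : Continuous σ := by
      simp only [hσdef]
      exact continuous_const.add (continuous_id.smul continuous_const)
    -- rigidity of pinned pairs
    have rigid : ∀ t s : ℝ, ‖f s - f t‖ ≤ r (f t) → ‖f s - f t‖ = |s - t| * L := by
      intro t s h
      have h1 : f s ∈ closedBall (f t) (r (f t)) := by
        rw [mem_closedBall, dist_eq_norm]; exact h
      have h3 := hiso (f t) (f s) h1 (f t) (mem_closedBall_self (hr _).le)
      rw [hfσ, hfσ] at h3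
      rw [← h3, hσn]
    -- the good set and its openness
    set GOOD : Set ℝ :=
      {t : ℝ | ∃ ε > 0, ∀ s : ℝ, |s - t| ≤ ε → ‖f s - f t‖ ≤ r (f t)} with hGdef
    have good_open : IsOpen GOOD := by
      rw [Metric.isOpen_iff]
      rintro t ⟨ε, hε, hGt⟩
      refine ⟨ε/2, half_pos hε, fun s' hs' => ?_⟩
      rw [Metric.mem_ball, Real.dist_eq] at hs'
      have hrs' : 0 < r (f s') := hr _
      refine ⟨min (ε/2) (r (f s')/(L+1)),
        lt_min (half_pos hε) (div_pos hrs' (by linarith)), fun s'' hs'' => ?_⟩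
      have hs''2 : |s'' - s'| ≤ ε/2 := le_trans hs'' (min_le_left _ _)
      have hs''3 : |s'' - s'| ≤ r (f s')/(L+1) := le_trans hs'' (min_le_right _ _)
      have h1 : |s'' - t| ≤ ε := by
        have := abs_sub_le s'' s' t
        linarith [hs'.le]
      have hA : f s'' ∈ closedBall (f t) (r (f t)) := by
        rw [mem_closedBall, dist_eq_norm]; exact hGt s'' h1
      have hB : f s' ∈ closedBall (f t) (r (f t)) := by
        rw [mem_closedBall, dist_eq_norm]
        exact hGt s' (by linarith [hs'.le] : |s' - t| ≤ ε)
      have h3 := hiso (f t) (f s'') hA (f s') hB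
      rw [hfσ, hfσ] at h3
      rw [← h3, hσn]
      calc |s'' - s'| * L ≤ (r (f s')/(L+1)) * L :=
            mul_le_mul_of_nonneg_right hs''3 hL0
      _ ≤ r (f s') := by
            rw [div_mul_eq_mul_div, div_le_iff₀ (by linarith : (0:ℝ) < L+1)]
            nlinarith [hrs'.le]
    -- Lipschitz bound on intervals of good points
    have goodIcc : ∀ a b : ℝ, a ≤ b → (∀ t ∈ Set.Icc a b, t ∈ GOOD) →
        ∀ t ∈ Set.Icc a b, ‖f t - f a‖ ≤ L * (t - a) := by
      intro a b hab hg
      refine lip_of_loc f L a b hab ?_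
      intro t ht
      obtain ⟨ε, hε, hGt⟩ := hg t ht
      refine ⟨ε, hε, fun s hs => ?_⟩
      have := rigid t s (hGt s hs)
      rw [this, mul_comm]
    -- Cauchy transfer
    have cauchy_comp : ∀ w : ℕ → ℝ, CauchySeq w →
        (∀ n m : ℕ, ‖f (w n) - f (w m)‖ ≤ L * |w n - w m|) →
        CauchySeq (fun n => f (w n)) := by
      intro w hw hb
      rw [Metric.cauchySeq_iff] at hw ⊢
      intro ε hε
      obtain ⟨N, hN⟩ := hw (ε/(L+1)) (div_pos hε (by linarith))
      refine ⟨N, fun m hm n hn => ?_⟩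
      have h1 := hb m n
      have h2 := hN m hm n hn
      rw [Real.dist_eq] at h2
      rw [dist_eq_norm]
      have h3 : L * |w m - w n| ≤ L * (ε/(L+1)) :=
        mul_le_mul_of_nonneg_left h2.le hL0
      have h4 : L * (ε/(L+1)) < ε := by
        rw [show L * (ε/(L+1)) = L*ε/(L+1) from (mul_div_assoc _ _ _).symm,
          div_lt_iff₀ (by linarith : (0:ℝ) < L+1)]
        nlinarith
      linarith
    -- limits of f along converging sequences
    have flim : ∀ (w : ℕ → ℝ) (c : ℝ), Tendsto w atTop (𝓝 c) →
        CauchySeq (fun n => f (w n)) →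
        Tendsto (fun n => f (w n)) atTop (𝓝 (f c)) := by
      intro w c hwc hcs
      obtain ⟨x, hx⟩ := cauchySeq_tendsto_of_complete hcs
      have h1 : Tendsto (fun n => U (f (w n))) atTop (𝓝 (U x)) :=
        ((hUcont.tendsto x).comp hx)
      have h3 : (fun n => U (f (w n))) = fun n => σ (w n) := funext fun n => hfσ _
      rw [h3] at h1
      have h2 : Tendsto (fun n => σ (w n)) atTop (𝓝 (σ c)) :=
        ((hσcont.tendsto c).comp hwc)
      have h4 : U x = σ c := tendsto_nhds_unique h1 h2
      have h5 : f c = x := hU.1 (by rw [hfσ, h4])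
      rwa [h5]
    -- Lipschitz bound when the right endpoint may be bad
    have lipIco : ∀ a b : ℝ, a ≤ b → (∀ t ∈ Set.Ico a b, t ∈ GOOD) →
        ‖f b - f a‖ ≤ L * (b - a) := by
      intro a b hab hgood
      rcases eq_or_lt_of_le hab with rfl | hlt
      · simp
      · set w : ℕ → ℝ := fun n => b - (b - a)/(n + 1) with hwdef
        have hba : 0 < b - a := by linarith
        have hwa : ∀ n : ℕ, a ≤ w n := by
          intro n
          have hn1 : (1:ℝ) ≤ (n:ℝ) + 1 := by
            have := Nat.cast_nonneg (α := ℝ) n; linarith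
          have h1 : (b - a)/((n:ℝ) + 1) ≤ b - a := div_le_self hba.le hn1
          simp only [hwdef]; linarith
        have hwb : ∀ n : ℕ, w n < b := by
          intro n
          have : 0 < (b - a)/((n:ℝ)+1) := div_pos hba (by positivity)
          simp only [hwdef]; linarith
        have hwt : Tendsto w atTop (𝓝 b) := by
          have h0 : Tendsto (fun n : ℕ => (b - a)/((n:ℝ) + 1)) atTop (𝓝 0) :=
            Tendsto.div_atTop tendsto_const_nhds
              (tendsto_atTop_add_const_right atTop 1 tendsto_natCast_atTop_atTop)
          have := h0.const_sub b
          simp only [sub_zero] at this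
          simpa only [hwdef] using this
        have hpair : ∀ n m : ℕ, ‖f (w n) - f (w m)‖ ≤ L * |w n - w m| := by
          intro n m
          rcases le_total (w m) (w n) with h | h
          · have hsub : ∀ t ∈ Set.Icc (w m) (w n), t ∈ GOOD := fun t ht =>
              hgood t ⟨le_trans (hwa m) ht.1, lt_of_le_of_lt ht.2 (hwb n)⟩
            have := goodIcc (w m) (w n) h hsub (w n) ⟨h, le_refl _⟩
            rw [abs_of_nonneg (by linarith : (0:ℝ) ≤ w n - w m)]
            linarith [this]
          · have hsub : ∀ t ∈ Set.Icc (w n) (w m), t ∈ GOOD := fun t ht =>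
              hgood t ⟨le_trans (hwa n) ht.1, lt_of_le_of_lt ht.2 (hwb m)⟩
            have := goodIcc (w n) (w m) h hsub (w m) ⟨h, le_refl _⟩
            rw [norm_sub_rev, abs_sub_comm, abs_of_nonneg (by linarith : (0:ℝ) ≤ w m - w n)]
            linarith [this]
        have hcs := cauchy_comp w hwt.cauchySeq hpair
        have hft := flim w b hwt hcs
        have hbnd : ∀ n : ℕ, ‖f (w n) - f a‖ ≤ L * (w n - a) := by
          intro n
          have hsub : ∀ t ∈ Set.Icc a (w n), t ∈ GOOD := fun t ht =>
            hgood t ⟨ht.1, lt_of_le_of_lt ht.2 (hwb n)⟩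
          exact goodIcc a (w n) (hwa n) hsub (w n) ⟨hwa n, le_refl _⟩
        have h1 : Tendsto (fun n => ‖f (w n) - f a‖) atTop (𝓝 ‖f b - f a‖) :=
          (hft.sub tendsto_const_nhds).norm
        have h2 : Tendsto (fun n => L * (w n - a)) atTop (𝓝 (L * (b - a))) :=
          (hwt.sub tendsto_const_nhds).const_mul L
        exact le_of_tendsto_of_tendsto' h1 h2 hbnd
    -- Lipschitz bound when the left endpoint may be bad
    have lipIoc : ∀ a b : ℝ, a ≤ b → (∀ t ∈ Set.Ioc a b, t ∈ GOOD) →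
        ‖f b - f a‖ ≤ L * (b - a) := by
      intro a b hab hgood
      rcases eq_or_lt_of_le hab with rfl | hlt
      · simp
      · set w : ℕ → ℝ := fun n => a + (b - a)/(n + 1) with hwdef
        have hba : 0 < b - a := by linarith
        have hwa : ∀ n : ℕ, a < w n := by
          intro n
          have : 0 < (b - a)/((n:ℝ)+1) := div_pos hba (by positivity)
          simp only [hwdef]; linarith
        have hwb : ∀ n : ℕ, w n ≤ b := by
          intro n
          have hn1 : (1:ℝ) ≤ (n:ℝ) + 1 := by
            have := Nat.cast_nonneg (α := ℝ) n; linarith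
          have h1 : (b - a)/((n:ℝ) + 1) ≤ b - a := div_le_self hba.le hn1
          simp only [hwdef]; linarith
        have hwt : Tendsto w atTop (𝓝 a) := by
          have h0 : Tendsto (fun n : ℕ => (b - a)/((n:ℝ) + 1)) atTop (𝓝 0) :=
            Tendsto.div_atTop tendsto_const_nhds
              (tendsto_atTop_add_const_right atTop 1 tendsto_natCast_atTop_atTop)
          have := h0.const_add a
          simp only [add_zero] at this
          simpa only [hwdef] using this
        have hpair : ∀ n m : ℕ, ‖f (w n) - f (w m)‖ ≤ L * |w n - w m| := by
          intro n m
          rcases le_total (w m) (w n) with h | h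
          · have hsub : ∀ t ∈ Set.Icc (w m) (w n), t ∈ GOOD := fun t ht =>
              hgood t ⟨lt_of_lt_of_le (hwa m) ht.1, le_trans ht.2 (hwb n)⟩
            have := goodIcc (w m) (w n) h hsub (w n) ⟨h, le_refl _⟩
            rw [abs_of_nonneg (by linarith : (0:ℝ) ≤ w n - w m)]
            linarith [this]
          · have hsub : ∀ t ∈ Set.Icc (w n) (w m), t ∈ GOOD := fun t ht =>
              hgood t ⟨lt_of_lt_of_le (hwa n) ht.1, le_trans ht.2 (hwb m)⟩
            have := goodIcc (w n) (w m) h hsub (w m) ⟨h, le_refl _⟩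
            rw [norm_sub_rev, abs_sub_comm, abs_of_nonneg (by linarith : (0:ℝ) ≤ w m - w n)]
            linarith [this]
        have hcs := cauchy_comp w hwt.cauchySeq hpair
        have hft := flim w a hwt hcs
        have hbnd : ∀ n : ℕ, ‖f b - f (w n)‖ ≤ L * (b - w n) := by
          intro n
          have hsub : ∀ t ∈ Set.Icc (w n) b, t ∈ GOOD := fun t ht =>
            hgood t ⟨lt_of_lt_of_le (hwa n) ht.1, ht.2⟩
          exact goodIcc (w n) b (hwb n) hsub b ⟨hwb n, le_refl _⟩
        have h1 : Tendsto (fun n => ‖f b - f (w n)‖) atTop (𝓝 ‖f b - f a‖) :=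
          (tendsto_const_nhds.sub hft).norm
        have h2 : Tendsto (fun n => L * (b - w n)) atTop (𝓝 (L * (b - a))) :=
          (tendsto_const_nhds.sub hwt).const_mul L
        exact le_of_tendsto_of_tendsto' h1 h2 hbnd
    -- Baire category: every point is good
    have hallgood : ∀ t : ℝ, t ∈ GOOD := by
      by_contra hng
      push_neg at hng
      obtain ⟨t₀, ht₀⟩ := hng
      set BAD : Set ℝ := GOODᶜ with hBdef
      have hBne : BAD.Nonempty := ⟨t₀, ht₀⟩
      have hBclosed : IsClosed BAD := good_open.isClosed_compl
      obtain ⟨u, hu⟩ := TopologicalSpace.exists_dense_seq X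
      set E : ℕ × ℚ → Set ℝ := fun k =>
        if (∀ x₁ ∈ closedBall (u k.1) (k.2:ℝ), ∀ x₂ ∈ closedBall (u k.1) (k.2:ℝ),
            ‖U x₁ - U x₂‖ = ‖x₁ - x₂‖)
        then {t : ℝ | f t ∈ closedBall (u k.1) (k.2:ℝ)} else ∅ with hEdef
      have hEiso : ∀ k, ∀ t ∈ E k, ∀ s ∈ E k, ‖f s - f t‖ = |s - t| * L := by
        intro k t ht s hs
        simp only [hEdef] at ht hs
        split_ifs at ht hs with hP
        · have h3 := hP (f s) hs (f t) ht
          rw [hfσ, hfσ] at h3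
          rw [← h3, hσn]
        · exact absurd ht (Set.notMem_empty t)
      have hEclosed : ∀ k, IsClosed (E k) := by
        intro k
        simp only [hEdef]
        split_ifs with hP
        · apply IsSeqClosed.isClosed
          intro ts t hts hlim
          have hpair : ∀ n m : ℕ, ‖f (ts n) - f (ts m)‖ ≤ L * |ts n - ts m| := by
            intro n m
            have h3 := hP (f (ts n)) (hts n) (f (ts m)) (hts m)
            rw [hfσ, hfσ] at h3
            have h4 : ‖f (ts n) - f (ts m)‖ = |ts n - ts m| * L := by rw [← h3, hσn]
            rw [h4, mul_comm]
          have hcs := cauchy_comp ts hlim.cauchySeq hpair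
          have hft := flim ts t hlim hcs
          show f t ∈ closedBall (u k.1) (k.2:ℝ)
          exact IsClosed.mem_of_tendsto isClosed_closedBall hft
            (Filter.Eventually.of_forall (fun n => hts n))
        · exact isClosed_empty
      have hEcover : ∀ t : ℝ, ∃ k, t ∈ E k := by
        intro t
        have hrt : 0 < r (f t) := hr _
        obtain ⟨m, hm⟩ := hu.exists_dist_lt (f t) (by linarith : (0:ℝ) < r (f t)/4)
        obtain ⟨q, hq1, hq2⟩ := exists_rat_btwn (show r (f t)/4 < r (f t)/2 by linarith)
        refine ⟨(m, q), ?_⟩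
        have hP : ∀ x₁ ∈ closedBall (u m) (q:ℝ), ∀ x₂ ∈ closedBall (u m) (q:ℝ),
            ‖U x₁ - U x₂‖ = ‖x₁ - x₂‖ := by
          have hsub : closedBall (u m) (q:ℝ) ⊆ closedBall (f t) (r (f t)) := by
            intro x hx
            rw [mem_closedBall] at hx ⊢
            have htr := dist_triangle x (u m) (f t)
            have hdm : dist (u m) (f t) < r (f t)/4 := by rwa [dist_comm] at hm
            linarith
          intro x₁ h₁ x₂ h₂
          exact hiso (f t) x₁ (hsub h₁) x₂ (hsub h₂)
        simp only [hEdef, if_pos hP]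
        rw [Set.mem_setOf_eq, mem_closedBall]
        exact (hm.trans hq1).le
      haveI : Nonempty ↥BAD := hBne.to_subtype
      haveI : CompleteSpace ↥BAD := hBclosed.completeSpace_coe
      set F : ℕ × ℚ → Set ↥BAD := fun k => (Subtype.val) ⁻¹' (E k) with hFdef
      have hFclosed : ∀ k, IsClosed (F k) := fun k =>
        (hEclosed k).preimage continuous_subtype_val
      have hFcover : (⋃ k, F k) = Set.univ := by
        ext s
        simp only [Set.mem_iUnion, Set.mem_univ, iff_true, hFdef, Set.mem_preimage]
        exact hEcover s.val
      obtain ⟨k, hk⟩ := nonempty_interior_of_iUnion_of_closed hFclosed hFcover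
      obtain ⟨t0, ht0⟩ := hk
      obtain ⟨ε₀, hε₀, hball⟩ := Metric.mem_nhds_iff.1 (mem_interior_iff_mem_nhds.1 ht0)
      have hwind : ∀ s : ℝ, s ∈ BAD → |s - t0.val| < ε₀ → s ∈ E k := by
        intro s hs habs
        have hmem : (⟨s, hs⟩ : ↥BAD) ∈ Metric.ball t0 ε₀ := by
          rw [Metric.mem_ball, Subtype.dist_eq, Real.dist_eq]; exact habs
        exact hball hmem
      have htB : t0.val ∈ BAD := t0.2
      have htE : t0.val ∈ E k := hwind t0.val htB (by simpa using hε₀)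
      have hrs : 0 < r (f t0.val) := hr _
      have hεpos : 0 < min (ε₀/2) (r (f t0.val)/(2*(L+1))) :=
        lt_min (half_pos hε₀) (div_pos hrs (by linarith))
      set ε := min (ε₀/2) (r (f t0.val)/(2*(L+1))) with hεdef
      have hLε : L * ε ≤ r (f t0.val)/2 := by
        have hεrs : ε ≤ r (f t0.val)/(2*(L+1)) := min_le_right _ _
        have h4 : L * ε ≤ L * (r (f t0.val)/(2*(L+1))) :=
          mul_le_mul_of_nonneg_left hεrs hL0
        have h5 : L * (r (f t0.val)/(2*(L+1))) ≤ r (f t0.val)/2 := by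
          rw [show L * (r (f t0.val)/(2*(L+1))) = L*(r (f t0.val))/(2*(L+1)) from
              (mul_div_assoc _ _ _).symm,
            div_le_div_iff₀ (by linarith : (0:ℝ) < 2*(L+1)) (by norm_num : (0:ℝ) < 2)]
          nlinarith [hrs.le]
        linarith
      have hclaim : ∀ s : ℝ, |s - t0.val| ≤ ε → ‖f s - f t0.val‖ ≤ r (f t0.val) := by
        intro s hsε
        have hsε₀ : |s - t0.val| < ε₀ := by
          have h1 : ε ≤ ε₀/2 := min_le_left _ _
          linarith
        by_cases hsB : s ∈ BAD
        · have hsE := hwind s hsB hsε₀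
          have heq := hEiso k t0.val htE s hsE
          rw [heq]
          have h1 : |s - t0.val| * L ≤ ε * L := mul_le_mul_of_nonneg_right hsε hL0
          calc |s - t0.val| * L ≤ ε * L := h1
          _ = L * ε := mul_comm _ _
          _ ≤ r (f t0.val)/2 := hLε
          _ ≤ r (f t0.val) := by linarith
        · have hsG : s ∈ GOOD := by
            by_contra hsGn
            exact hsB hsGn
          rcases lt_trichotomy s t0.val with hst | hst | hst
          · -- s < t0
            have hBne2 : (BAD ∩ Set.Icc s t0.val).Nonempty :=
              ⟨t0.val, htB, ⟨hst.le, le_refl _⟩⟩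
            have hBcl2 : IsClosed (BAD ∩ Set.Icc s t0.val) := hBclosed.inter isClosed_Icc
            have hbdd2 : BddBelow (BAD ∩ Set.Icc s t0.val) := ⟨s, fun v hv => hv.2.1⟩
            have hβmem : sInf (BAD ∩ Set.Icc s t0.val) ∈ BAD ∩ Set.Icc s t0.val :=
              hBcl2.csInf_mem hBne2 hbdd2
            set β := sInf (BAD ∩ Set.Icc s t0.val) with hβdef
            have hsβ : s < β := by
              rcases lt_or_eq_of_le hβmem.2.1 with h | h
              · exact h
              · exact absurd (h ▸ hβmem.1) hsB
            have hgood2 : ∀ v ∈ Set.Ico s β, v ∈ GOOD := by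
              intro v hv
              by_contra hvB
              have hvmem : v ∈ BAD ∩ Set.Icc s t0.val :=
                ⟨hvB, ⟨hv.1, le_trans hv.2.le hβmem.2.2⟩⟩
              have := csInf_le hbdd2 hvmem
              rw [← hβdef] at this
              linarith [hv.2]
            have h6 : ‖f β - f s‖ ≤ L * (β - s) := lipIco s β hsβ.le hgood2
            have hβt : |β - t0.val| < ε₀ := by
              have h1 : β ≤ t0.val := hβmem.2.2
              have h2 : |β - t0.val| = t0.val - β := by
                rw [abs_sub_comm]; exact abs_of_nonneg (by linarith)
              have h3 : |s - t0.val| = t0.val - s := by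
                rw [abs_sub_comm]; exact abs_of_nonneg (by linarith)
              rw [h2]; rw [h3] at hsε₀; linarith
            have hβE : β ∈ E k := hwind β hβmem.1 hβt
            have h7 := hEiso k t0.val htE β hβE
            have habs1 : |β - t0.val| = t0.val - β := by
              rw [abs_sub_comm]; exact abs_of_nonneg (by linarith [hβmem.2.2])
            have habs2 : |s - t0.val| = t0.val - s := by
              rw [abs_sub_comm]; exact abs_of_nonneg (by linarith)
            have htri : ‖f s - f t0.val‖ ≤ ‖f s - f β‖ + ‖f β - f t0.val‖ := by
              have := dist_triangle (f s) (f β) (f t0.val)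
              simpa [dist_eq_norm] using this
            have h8 : ‖f s - f β‖ = ‖f β - f s‖ := norm_sub_rev _ _
            rw [habs1] at h7
            have h11 : t0.val - s ≤ ε := by rw [habs2] at hsε; exact hsε
            have h12 : L * (t0.val - s) ≤ L * ε := mul_le_mul_of_nonneg_left h11 hL0
            have hring : L * (β - s) + (t0.val - β) * L = L * (t0.val - s) := by ring
            linarith [htri, h6, h7, hLε, h8 ▸ htri]
          · rw [hst]
            simp only [sub_self, norm_zero]
            exact hrs.le
          · -- t0 < s
            have hBne2 : (BAD ∩ Set.Icc t0.val s).Nonempty :=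
              ⟨t0.val, htB, ⟨le_refl _, hst.le⟩⟩
            have hBcl2 : IsClosed (BAD ∩ Set.Icc t0.val s) := hBclosed.inter isClosed_Icc
            have hbdd2 : BddAbove (BAD ∩ Set.Icc t0.val s) := ⟨s, fun v hv => hv.2.2⟩
            have hβmem : sSup (BAD ∩ Set.Icc t0.val s) ∈ BAD ∩ Set.Icc t0.val s :=
              hBcl2.csSup_mem hBne2 hbdd2
            set β := sSup (BAD ∩ Set.Icc t0.val s) with hβdef
            have hβs : β < s := by
              rcases lt_or_eq_of_le hβmem.2.2 with h | h
              · exact h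
              · exact absurd (h ▸ hβmem.1) hsB
            have hgood2 : ∀ v ∈ Set.Ioc β s, v ∈ GOOD := by
              intro v hv
              by_contra hvB
              have hvmem : v ∈ BAD ∩ Set.Icc t0.val s :=
                ⟨hvB, ⟨le_trans hβmem.2.1 hv.1.le, hv.2⟩⟩
              have := le_csSup hbdd2 hvmem
              rw [← hβdef] at this
              linarith [hv.1]
            have h6 : ‖f s - f β‖ ≤ L * (s - β) := lipIoc β s hβs.le hgood2
            have hβt : |β - t0.val| < ε₀ := by
              have h1 : t0.val ≤ β := hβmem.2.1
              have h2 : |β - t0.val| = β - t0.val := abs_of_nonneg (by linarith)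
              have h3 : |s - t0.val| = s - t0.val := abs_of_nonneg (by linarith)
              rw [h2]; rw [h3] at hsε₀; linarith [hβmem.2.2]
            have hβE : β ∈ E k := hwind β hβmem.1 hβt
            have h7 := hEiso k t0.val htE β hβE
            have habs1 : |β - t0.val| = β - t0.val := abs_of_nonneg (by linarith [hβmem.2.1])
            have habs2 : |s - t0.val| = s - t0.val := abs_of_nonneg (by linarith)
            have htri : ‖f s - f t0.val‖ ≤ ‖f s - f β‖ + ‖f β - f t0.val‖ := by
              have := dist_triangle (f s) (f β) (f t0.val)
              simpa [dist_eq_norm] using this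
            rw [habs1] at h7
            have h11 : s - t0.val ≤ ε := by rw [habs2] at hsε; exact hsε
            have h12 : L * (s - t0.val) ≤ L * ε := mul_le_mul_of_nonneg_left h11 hL0
            have hring : L * (s - β) + (β - t0.val) * L = L * (s - t0.val) := by ring
            linarith [htri, h6, h7, hLε]
      exact htB ⟨ε, hεpos, hclaim⟩
    -- conclude: f is Lipschitz on [0,1]
    have hfin := lipIco 0 1 zero_le_one (fun t _ => hallgood t)
    have hσ1 : σ 1 = y₂ := by simp [hσdef]
    have hσ0 : σ 0 = y₁ := by simp [hσdef]
    have hf1 : f 1 = V y₂ := by simp only [hfdef, hσ1]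
    have hf0 : f 0 = V y₁ := by simp only [hfdef, hσ0]
    rw [hf1, hf0] at hfin
    calc ‖V y₁ - V y₂‖ = ‖V y₂ - V y₁‖ := norm_sub_rev _ _
    _ ≤ L * (1 - 0) := hfin
    _ = ‖y₁ - y₂‖ := by rw [hLdef, norm_sub_rev]; ring
  refine ⟨hU.2, fun x₁ x₂ => le_antisymm (hUlip x₁ x₂) ?_⟩
  have h := hVlip (U x₁) (U x₂)
  rw [hVU, hVU] at h
  exact h
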